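/- arXiv:1909.04298 — 4 statements merged into one kernel-verified Lean document; each statement's English description precedes it below -/
import Mathlib

section
/- The family ℬ := {V_α(x) : x ∈ X, α ∈ [‖x‖,λ)} is a base of the topology τ on X. -/
universe u v

open Ordinal Set Topology Cardinal

namespace LawsonExample

def Xset (lam : Cardinal.{u}) : Set (Ordinal.{u} → Fin 3) :=
  {x | (∀ γ : Ordinal.{u}, lam.ord ≤ γ → x γ = 2) ∧ {γ : Ordinal.{u} | x γ ≠ 2}.Finite}

noncomputable def nrm (x : Ordinal.{u} → Fin 3) : Ordinal.{u} :=
  sInf {α | ∀ γ, α ≤ γ → x γ = 2}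

noncomputable def Vnbhd (lam : Cardinal.{u}) (x : ↥(Xset lam)) (α : Ordinal.{u}) :
    Set ↥(Xset lam) :=
  if x.1 0 = 2 then {x}
  else if x.1 0 = 1 then
    {y | (∀ γ, 1 ≤ γ → γ < α → y.1 γ = x.1 γ) ∧
         (∀ γ, α ≤ γ → γ < lam.ord → y.1 γ ≠ 1) ∧
         (y.1 0 = 1 ∨ (y.1 0 = 2 ∧ α < nrm y.1))}
  else
    {y | (∀ γ, 1 ≤ γ → γ < α → y.1 γ = x.1 γ) ∧
         (y.1 0 = 0 ∨ (y.1 0 = 2 ∧ α < nrm y.1 ∧ y.1 (Ordinal.pred (nrm y.1)) = 1))}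

def tauSet (lam : Cardinal.{u}) : Set (Set ↥(Xset lam)) :=
  {U | ∀ x ∈ U, ∃ α : Ordinal.{u}, nrm x.1 ≤ α ∧ α < lam.ord ∧ Vnbhd lam x α ⊆ U}

lemma nrm_spec {lam : Cardinal.{u}} (x : ↥(Xset lam)) {γ : Ordinal.{u}}
    (h : nrm x.1 ≤ γ) : x.1 γ = 2 := by
  have hne : {α : Ordinal.{u} | ∀ γ, α ≤ γ → x.1 γ = 2}.Nonempty :=
    ⟨lam.ord, fun γ hγ => x.2.1 γ hγ⟩
  exact csInf_mem hne γ h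

lemma nrm_lt {lam : Cardinal.{u}} (hlam : ℵ₀ ≤ lam) (x : ↥(Xset lam)) :
    nrm x.1 < lam.ord := by
  have hlim : Order.IsSuccLimit lam.ord := Cardinal.isSuccLimit_ord hlam
  rcases eq_empty_or_nonempty {γ | x.1 γ ≠ 2} with he | hne
  · have h0 : nrm x.1 ≤ 0 := csInf_le' (fun γ _ => by
      by_contra hc
      exact (eq_empty_iff_forall_notMem.1 he γ) hc)
    exact lt_of_le_of_lt h0 hlim.pos
  · set m := sSup {γ | x.1 γ ≠ 2} with hm_def
    have hmem : m ∈ {γ | x.1 γ ≠ 2} := hne.csSup_mem x.2.2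
    have hm : m < lam.ord := lt_of_not_ge fun h => hmem (x.2.1 m h)
    have hb : nrm x.1 ≤ m + 1 := csInf_le' (fun γ hγ => by
      by_contra hc
      have hle : γ ≤ m := le_csSup x.2.2.bddAbove hc
      rw [Ordinal.add_one_eq_succ] at hγ
      exact absurd hγ (not_le.2 (lt_of_le_of_lt hle (Order.lt_succ m))))
    have : m + 1 < lam.ord := by
      rw [Ordinal.add_one_eq_succ]; exact hlim.succ_lt hm
    exact lt_of_le_of_lt hb this

lemma fin3_cases (a : Fin 3) : a = 0 ∨ a = 1 ∨ a = 2 := by revert a; decide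

lemma mem_Vnbhd_self {lam : Cardinal.{u}} (x : ↥(Xset lam)) {α : Ordinal.{u}}
    (h : nrm x.1 ≤ α) : x ∈ Vnbhd lam x α := by
  rcases fin3_cases (x.1 0) with h0 | h0 | h0
  · have h2 : x.1 0 ≠ 2 := by rw [h0]; decide
    have h1 : x.1 0 ≠ 1 := by rw [h0]; decide
    rw [Vnbhd, if_neg h2, if_neg h1]
    exact ⟨fun γ _ _ => rfl, Or.inl h0⟩
  · have h2 : x.1 0 ≠ 2 := by rw [h0]; decide
    rw [Vnbhd, if_neg h2, if_pos h0]
    refine ⟨fun γ _ _ => rfl, fun γ hγ _ => ?_, Or.inl h0⟩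
    rw [nrm_spec x (le_trans h hγ)]; decide
  · rw [Vnbhd, if_pos h0]; exact rfl

lemma Vnbhd_mono {lam : Cardinal.{u}} (x : ↥(Xset lam)) {α β : Ordinal.{u}}
    (hα : nrm x.1 ≤ α) (hαβ : α ≤ β) : Vnbhd lam x β ⊆ Vnbhd lam x α := by
  rcases fin3_cases (x.1 0) with h0 | h0 | h0
  · have h2 : x.1 0 ≠ 2 := by rw [h0]; decide
    have h1 : x.1 0 ≠ 1 := by rw [h0]; decide
    rw [Vnbhd, Vnbhd, if_neg h2, if_neg h1, if_neg h2, if_neg h1]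
    rintro y ⟨hr, hy⟩
    refine ⟨fun γ h1γ h2γ => hr γ h1γ (lt_of_lt_of_le h2γ hαβ), ?_⟩
    rcases hy with hy | ⟨hy2, hylt, hyp⟩
    · exact Or.inl hy
    · exact Or.inr ⟨hy2, lt_of_le_of_lt hαβ hylt, hyp⟩
  · have h2 : x.1 0 ≠ 2 := by rw [h0]; decide
    rw [Vnbhd, Vnbhd, if_neg h2, if_pos h0, if_neg h2, if_pos h0]
    rintro y ⟨hr, hns, hy⟩
    have hα1 : 1 ≤ α := by
      by_contra hc
      have : α = 0 := Ordinal.lt_one_iff_zero.1 (not_le.1 hc)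
      have : x.1 0 = 2 := nrm_spec x (by rw [← this]; exact hα)
      exact h2 this
    refine ⟨fun γ h1γ h2γ => hr γ h1γ (lt_of_lt_of_le h2γ hαβ), ?_, ?_⟩
    · intro γ hγ hγlt
      by_cases hγβ : β ≤ γ
      · exact hns γ hγβ hγlt
      · have h1γ : 1 ≤ γ := le_trans hα1 hγ
        rw [hr γ h1γ (not_le.1 hγβ)]
        rw [nrm_spec x (le_trans hα hγ)]
        decide
    · rcases hy with hy | ⟨hy2, hylt⟩
      · exact Or.inl hy
      · exact Or.inr ⟨hy2, lt_of_le_of_lt hαβ hylt⟩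
  · rw [Vnbhd, Vnbhd, if_pos h0, if_pos h0]

noncomputable def tau (lam : Cardinal.{u}) (hlam : ℵ₀ ≤ lam) :
    TopologicalSpace ↥(Xset lam) where
  IsOpen U := U ∈ tauSet lam
  isOpen_univ := fun x _ =>
    ⟨nrm x.1, le_rfl, nrm_lt hlam x, subset_univ _⟩
  isOpen_inter := by
    intro U V hU hV x hx
    obtain ⟨α, hα1, hα2, hα3⟩ := hU x hx.1
    obtain ⟨β, hβ1, hβ2, hβ3⟩ := hV x hx.2
    refine ⟨max α β, le_trans hα1 (le_max_left _ _), max_lt hα2 hβ2, fun y hy => ?_⟩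
    exact ⟨hα3 (Vnbhd_mono x hα1 (le_max_left _ _) hy),
           hβ3 (Vnbhd_mono x hβ1 (le_max_right _ _) hy)⟩
  isOpen_sUnion := by
    intro S hS x hx
    obtain ⟨U, hU, hxU⟩ := hx
    obtain ⟨α, hα1, hα2, hα3⟩ := hS U hU x hxU
    exact ⟨α, hα1, hα2, fun y hy => ⟨U, hU, hα3 hy⟩⟩


/-- The semilattice operation of `X`: pointwise minimum. -/
noncomputable def pmin (lam : Cardinal.{u}) (x y : ↥(Xset lam)) : ↥(Xset lam) :=
  ⟨fun γ => min (x.1 γ) (y.1 γ), by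
    constructor
    · intro γ hγ
      show min (x.1 γ) (y.1 γ) = 2
      rw [x.2.1 γ hγ, y.2.1 γ hγ, min_self]
    · refine (x.2.2.union y.2.2).subset fun γ hγ => ?_
      have hγ' : min (x.1 γ) (y.1 γ) ≠ 2 := hγ
      simp only [mem_union, mem_setOf_eq]
      by_contra hc
      push_neg at hc
      rw [hc.1, hc.2, min_self] at hγ'
      exact hγ' rfl⟩

/-- `B` is a base of the topology `t`: it consists of open sets, and every open set is a
union of members of `B`. -/
def IsBase {X : Type v} (t : TopologicalSpace X) (B : Set (Set X)) : Prop :=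
  (∀ U ∈ B, IsOpen[t] U) ∧ ∀ U, IsOpen[t] U → ∃ S ⊆ B, U = ⋃₀ S

/-- The family `ℬ = {V_α(x) : x ∈ X, α ∈ [‖x‖, λ)}`. -/
def Vfamily (lam : Cardinal.{u}) : Set (Set ↥(Xset lam)) :=
  {W | ∃ (x : ↥(Xset lam)) (α : Ordinal.{u}), nrm x.1 ≤ α ∧ α < lam.ord ∧ W = Vnbhd lam x α}

/-- The weight of a topological space: the smallest cardinality of a base of its topology. -/
noncomputable def weight {X : Type v} (t : TopologicalSpace X) : Cardinal.{v} :=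
  sInf {c : Cardinal.{v} | ∃ B : Set (Set X), IsBase t B ∧ c = Cardinal.mk ↥B}

/-- The function `𝟎_β`, with `𝟎_β β = 0` and `𝟎_β γ = 2` for `γ ≠ β`. -/
noncomputable def zeroF (β : Ordinal.{u}) : Ordinal.{u} → Fin 3 :=
  fun γ => if γ = β then 0 else 2

/-- The function `𝟏_β`, with `𝟏_β β = 1` and `𝟏_β γ = 2` for `γ ≠ β`. -/
noncomputable def oneF (β : Ordinal.{u}) : Ordinal.{u} → Fin 3 :=
  fun γ => if γ = β then 1 else 2

lemma zeroF_mem (lam : Cardinal.{u}) {β : Ordinal.{u}} (h : β < lam.ord) :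
    zeroF β ∈ Xset lam := by
  constructor
  · intro γ hγ
    have hne : γ ≠ β := fun e => absurd h (not_lt.2 (e ▸ hγ))
    simp [zeroF, hne]
  · refine (finite_singleton β).subset fun γ hγ => ?_
    simp only [mem_setOf_eq, zeroF] at hγ
    by_contra hc
    simp only [mem_singleton_iff] at hc
    rw [if_neg hc] at hγ
    exact hγ rfl

lemma oneF_mem (lam : Cardinal.{u}) {β : Ordinal.{u}} (h : β < lam.ord) :
    oneF β ∈ Xset lam := by
  constructor
  · intro γ hγ
    have hne : γ ≠ β := fun e => absurd h (not_lt.2 (e ▸ hγ))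
    simp [oneF, hne]
  · refine (finite_singleton β).subset fun γ hγ => ?_
    simp only [mem_setOf_eq, oneF] at hγ
    by_contra hc
    simp only [mem_singleton_iff] at hc
    rw [if_neg hc] at hγ
    exact hγ rfl

/-- `𝟎_β` as an element of `X` (for `β < λ`). -/
noncomputable def zeroE (lam : Cardinal.{u}) {β : Ordinal.{u}} (h : β < lam.ord) :
    ↥(Xset lam) := ⟨zeroF β, zeroF_mem lam h⟩

/-- `𝟏_β` as an element of `X` (for `β < λ`). -/
noncomputable def oneE (lam : Cardinal.{u}) {β : Ordinal.{u}} (h : β < lam.ord) :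
    ↥(Xset lam) := ⟨oneF β, oneF_mem lam h⟩


lemma Vnbhd_eq_singleton {lam : Cardinal.{u}} (y : ↥(Xset lam)) (h : y.1 0 = 2)
    (α : Ordinal.{u}) : Vnbhd lam y α = {y} := by
  rw [Vnbhd, if_pos h]

lemma Vnbhd_mem_tauSet {lam : Cardinal.{u}} (hlam : ℵ₀ ≤ lam) (x : ↥(Xset lam))
    {α : Ordinal.{u}} (hα : nrm x.1 ≤ α) (hαl : α < lam.ord) :
    Vnbhd lam x α ∈ tauSet lam := by
  intro y hy
  rcases fin3_cases (x.1 0) with h0 | h0 | h0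
  · -- x(0) = 0
    have h2 : x.1 0 ≠ 2 := by rw [h0]; decide
    have h1 : x.1 0 ≠ 1 := by rw [h0]; decide
    rw [Vnbhd, if_neg h2, if_neg h1] at hy
    obtain ⟨hr, hc⟩ := hy
    rcases hc with hy0 | ⟨hy2, _, _⟩
    · -- y(0) = 0
      refine ⟨max α (nrm y.1), le_max_right _ _, max_lt hαl (nrm_lt hlam y), fun z hz => ?_⟩
      have hy2 : y.1 0 ≠ 2 := by rw [hy0]; decide
      have hy1 : y.1 0 ≠ 1 := by rw [hy0]; decide
      rw [Vnbhd, if_neg hy2, if_neg hy1] at hz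
      obtain ⟨zr, zc⟩ := hz
      rw [Vnbhd, if_neg h2, if_neg h1]
      refine ⟨fun γ h1γ h2γ => by
        rw [zr γ h1γ (lt_of_lt_of_le h2γ (le_max_left _ _))]; exact hr γ h1γ h2γ, ?_⟩
      rcases zc with z0 | ⟨z2, zlt, zp⟩
      · exact Or.inl z0
      · exact Or.inr ⟨z2, lt_of_le_of_lt (le_max_left _ _) zlt, zp⟩
    · -- y(0) = 2
      refine ⟨nrm y.1, le_rfl, nrm_lt hlam y, fun z hz => ?_⟩
      rw [Vnbhd_eq_singleton y hy2] at hz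
      rw [mem_singleton_iff] at hz
      subst hz
      rw [Vnbhd, if_neg h2, if_neg h1]
      exact ⟨hr, Or.inr ⟨hy2, by assumption, by assumption⟩⟩
  · -- x(0) = 1
    have h2 : x.1 0 ≠ 2 := by rw [h0]; decide
    rw [Vnbhd, if_neg h2, if_pos h0] at hy
    obtain ⟨hr, hns, hc⟩ := hy
    have hα1 : 1 ≤ α := by
      by_contra hcon
      have hz : α = 0 := Ordinal.lt_one_iff_zero.1 (not_le.1 hcon)
      have : x.1 0 = 2 := nrm_spec x (by rw [← hz]; exact hα)
      exact h2 this
    rcases hc with hy0 | ⟨hy2, hylt⟩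
    · -- y(0) = 1
      refine ⟨max α (nrm y.1), le_max_right _ _, max_lt hαl (nrm_lt hlam y), fun z hz => ?_⟩
      have hy2 : y.1 0 ≠ 2 := by rw [hy0]; decide
      rw [Vnbhd, if_neg hy2, if_pos hy0] at hz
      obtain ⟨zr, zns, zc⟩ := hz
      rw [Vnbhd, if_neg h2, if_pos h0]
      refine ⟨fun γ h1γ h2γ => by
        rw [zr γ h1γ (lt_of_lt_of_le h2γ (le_max_left _ _))]; exact hr γ h1γ h2γ, ?_, ?_⟩
      · intro γ hγ hγlt
        by_cases hβγ : max α (nrm y.1) ≤ γ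
        · exact zns γ hβγ hγlt
        · rw [zr γ (le_trans hα1 hγ) (not_le.1 hβγ)]
          exact hns γ hγ hγlt
      · rcases zc with z0 | ⟨z2, zlt⟩
        · exact Or.inl z0
        · exact Or.inr ⟨z2, lt_of_le_of_lt (le_max_left _ _) zlt⟩
    · -- y(0) = 2
      refine ⟨nrm y.1, le_rfl, nrm_lt hlam y, fun z hz => ?_⟩
      rw [Vnbhd_eq_singleton y hy2] at hz
      rw [mem_singleton_iff] at hz
      subst hz
      rw [Vnbhd, if_neg h2, if_pos h0]
      exact ⟨hr, hns, Or.inr ⟨hy2, hylt⟩⟩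
  · -- x(0) = 2
    rw [Vnbhd_eq_singleton x h0] at hy
    rw [mem_singleton_iff] at hy
    subst hy
    refine ⟨nrm y.1, le_rfl, nrm_lt hlam y, fun z hz => ?_⟩
    rw [Vnbhd_eq_singleton y h0] at hz
    rw [Vnbhd_eq_singleton y h0]
    exact hz

/-- **Claim 3.** The family `ℬ = {V_α(x) : x ∈ X, α ∈ [‖x‖, λ)}` is a base of
the topology `τ` on `X`. -/
theorem isBase_Vfamily (lam : Cardinal.{u}) (hlam : ℵ₀ ≤ lam) :
    IsBase (tau lam hlam) (Vfamily lam) := by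
  constructor
  · rintro U ⟨x, α, hα, hαl, rfl⟩
    exact Vnbhd_mem_tauSet hlam x hα hαl
  · intro U hU
    refine ⟨{W | W ∈ Vfamily lam ∧ W ⊆ U}, fun W hW => hW.1, ?_⟩
    apply Subset.antisymm
    · intro x hx
      obtain ⟨α, hα1, hα2, hα3⟩ := hU x hx
      exact ⟨Vnbhd lam x α, ⟨⟨x, α, hα1, hα2, rfl⟩, hα3⟩, mem_Vnbhd_self x hα1⟩
    · rintro x ⟨W, ⟨_, hWU⟩, hxW⟩
      exact hWU hxW

end LawsonExample
end

section
/- The topological space (X,τ) is zero-dimensional, i.e., it has a base of the topology τ consisting of clopen sets. -/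
universe u v

open Ordinal Set Topology Cardinal

namespace LawsonExample

lemma le_pred_of_lt' {β γ : Ordinal.{u}} (h : β < γ) : β ≤ Ordinal.pred γ := by
  rcases Ordinal.zero_or_succ_or_isSuccLimit γ with h0 | ⟨a, ha⟩ | hl
  · exact absurd h (by simp [h0])
  · subst ha; rw [Ordinal.pred_succ]; exact Order.lt_succ_iff.1 h
  · rw [hl.ordinalPred_eq]
    exact h.le

lemma one_le_of_nrm_le {lam : Cardinal.{u}} (x : ↥(Xset lam)) (h2 : x.1 0 ≠ 2)
    {α : Ordinal.{u}} (hα : nrm x.1 ≤ α) : 1 ≤ α := by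
  by_contra hc
  have hz : α = 0 := Ordinal.lt_one_iff_zero.1 (not_le.1 hc)
  exact h2 (nrm_spec x (hz ▸ hα))

lemma Vnbhd_trans {lam : Cardinal.{u}} {x y : ↥(Xset lam)} {α β : Ordinal.{u}}
    (hα : nrm x.1 ≤ α) (hy : y ∈ Vnbhd lam x α) (hαβ : α ≤ β) :
    Vnbhd lam y β ⊆ Vnbhd lam x α := by
  rcases fin3_cases (x.1 0) with h0 | h0 | h0
  · -- x 0 = 0
    have h2 : x.1 0 ≠ 2 := by rw [h0]; decide
    have h1 : x.1 0 ≠ 1 := by rw [h0]; decide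
    rw [Vnbhd, if_neg h2, if_neg h1] at hy
    obtain ⟨hr, hy0⟩ := hy
    rcases fin3_cases (y.1 0) with k0 | k0 | k0
    · have k2 : y.1 0 ≠ 2 := by rw [k0]; decide
      have k1 : y.1 0 ≠ 1 := by rw [k0]; decide
      intro z hz
      rw [Vnbhd, if_neg k2, if_neg k1] at hz
      obtain ⟨hzr, hz0⟩ := hz
      rw [Vnbhd, if_neg h2, if_neg h1]
      refine ⟨fun γ h1γ h2γ => by
        rw [hzr γ h1γ (lt_of_lt_of_le h2γ hαβ), hr γ h1γ h2γ], ?_⟩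
      rcases hz0 with hz0 | ⟨hz2, hzlt, hzp⟩
      · exact Or.inl hz0
      · exact Or.inr ⟨hz2, lt_of_le_of_lt hαβ hzlt, hzp⟩
    · rcases hy0 with hy0 | ⟨hy2, _⟩
      · exact absurd k0 (by rw [hy0]; decide)
      · exact absurd k0 (by rw [hy2]; decide)
    · intro z hz
      rw [Vnbhd, if_pos k0] at hz
      rw [mem_singleton_iff.1 hz, Vnbhd, if_neg h2, if_neg h1]
      exact ⟨hr, hy0⟩
  · -- x 0 = 1
    have h2 : x.1 0 ≠ 2 := by rw [h0]; decide
    rw [Vnbhd, if_neg h2, if_pos h0] at hy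
    obtain ⟨hr, hns, hy0⟩ := hy
    have hα1 : 1 ≤ α := one_le_of_nrm_le x h2 hα
    rcases fin3_cases (y.1 0) with k0 | k0 | k0
    · rcases hy0 with hy0 | ⟨hy2, _⟩
      · exact absurd k0 (by rw [hy0]; decide)
      · exact absurd k0 (by rw [hy2]; decide)
    · have k2 : y.1 0 ≠ 2 := by rw [k0]; decide
      intro z hz
      rw [Vnbhd, if_neg k2, if_pos k0] at hz
      obtain ⟨hzr, hzns, hz0⟩ := hz
      rw [Vnbhd, if_neg h2, if_pos h0]
      refine ⟨fun γ h1γ h2γ => by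
        rw [hzr γ h1γ (lt_of_lt_of_le h2γ hαβ), hr γ h1γ h2γ], ?_, ?_⟩
      · intro γ hγ hγlt
        by_cases hγβ : β ≤ γ
        · exact hzns γ hγβ hγlt
        · have h1γ : 1 ≤ γ := le_trans hα1 hγ
          rw [hzr γ h1γ (not_le.1 hγβ)]
          exact hns γ hγ hγlt
      · rcases hz0 with hz0 | ⟨hz2, hzlt⟩
        · exact Or.inl hz0
        · exact Or.inr ⟨hz2, lt_of_le_of_lt hαβ hzlt⟩
    · intro z hz
      rw [Vnbhd, if_pos k0] at hz
      rw [mem_singleton_iff.1 hz, Vnbhd, if_neg h2, if_pos h0]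
      exact ⟨hr, hns, hy0⟩
  · -- x 0 = 2
    rw [Vnbhd, if_pos h0] at hy
    rw [mem_singleton_iff.1 hy]
    intro z hz
    rw [show Vnbhd lam x β = {x} from by rw [Vnbhd, if_pos h0]] at hz
    rw [mem_singleton_iff.1 hz, Vnbhd, if_pos h0]
    exact rfl

lemma Vnbhd_open {lam : Cardinal.{u}} (hlam : ℵ₀ ≤ lam) {x : ↥(Xset lam)}
    {α : Ordinal.{u}} (hα : nrm x.1 ≤ α) (hαl : α < lam.ord) :
    Vnbhd lam x α ∈ tauSet lam := by
  intro y hy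
  exact ⟨max α (nrm y.1), le_max_right _ _, max_lt hαl (nrm_lt hlam y),
    Vnbhd_trans hα hy (le_max_left _ _)⟩

lemma Vnbhd_disj {lam : Cardinal.{u}} (hlam : ℵ₀ ≤ lam) {x y : ↥(Xset lam)}
    {α : Ordinal.{u}} (hα : nrm x.1 ≤ α) (hy : y ∉ Vnbhd lam x α) :
    ∀ z ∈ Vnbhd lam y (max α (nrm y.1)), z ∉ Vnbhd lam x α := by
  intro z hzy hzx
  apply hy
  set β := max α (nrm y.1) with hβ
  have hαβ : α ≤ β := le_max_left _ _
  have hyβ : nrm y.1 ≤ β := le_max_right _ _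
  rcases fin3_cases (y.1 0) with k0 | k0 | k0
  · -- y 0 = 0
    have k2 : y.1 0 ≠ 2 := by rw [k0]; decide
    have k1 : y.1 0 ≠ 1 := by rw [k0]; decide
    rw [Vnbhd, if_neg k2, if_neg k1] at hzy
    obtain ⟨hzr, hz0⟩ := hzy
    rcases fin3_cases (x.1 0) with h0 | h0 | h0
    · -- x 0 = 0 : show y ∈ Vnbhd x α directly
      have h2 : x.1 0 ≠ 2 := by rw [h0]; decide
      have h1 : x.1 0 ≠ 1 := by rw [h0]; decide
      rw [Vnbhd, if_neg h2, if_neg h1] at hzx ⊢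
      obtain ⟨hxr, _⟩ := hzx
      refine ⟨fun γ h1γ h2γ => by
        rw [← hzr γ h1γ (lt_of_lt_of_le h2γ hαβ), hxr γ h1γ h2γ], Or.inl k0⟩
    · -- x 0 = 1 : contradiction
      have h2 : x.1 0 ≠ 2 := by rw [h0]; decide
      rw [Vnbhd, if_neg h2, if_pos h0] at hzx
      obtain ⟨_, hxns, hx0⟩ := hzx
      exfalso
      rcases hz0 with hz0 | ⟨hz2, hzlt, hzp⟩
      · rcases hx0 with hx0 | ⟨hx2, _⟩
        · exact absurd hx0 (by rw [hz0]; decide)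
        · exact absurd hx2 (by rw [hz0]; decide)
      · have hp1 : α ≤ Ordinal.pred (nrm z.1) :=
          le_trans hαβ (le_pred_of_lt' hzlt)
        have hp2 : Ordinal.pred (nrm z.1) < lam.ord :=
          lt_of_le_of_lt (Ordinal.pred_le_self _) (nrm_lt hlam z)
        exact hxns _ hp1 hp2 hzp
    · -- x 0 = 2 : contradiction
      rw [Vnbhd, if_pos h0] at hzx
      exfalso
      have hzx2 : z.1 0 = 2 := by rw [mem_singleton_iff.1 hzx]; exact h0
      rcases hz0 with hz0 | ⟨_, hzlt, _⟩
      · exact absurd hzx2 (by rw [hz0]; decide)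
      · have : nrm z.1 ≤ β := by
          rw [mem_singleton_iff.1 hzx]; exact le_trans hα hαβ
        exact absurd hzlt (not_lt.2 this)
  · -- y 0 = 1
    have k2 : y.1 0 ≠ 2 := by rw [k0]; decide
    rw [Vnbhd, if_neg k2, if_pos k0] at hzy
    obtain ⟨hzr, hzns, hz0⟩ := hzy
    rcases fin3_cases (x.1 0) with h0 | h0 | h0
    · -- x 0 = 0 : contradiction
      have h2 : x.1 0 ≠ 2 := by rw [h0]; decide
      have h1 : x.1 0 ≠ 1 := by rw [h0]; decide
      rw [Vnbhd, if_neg h2, if_neg h1] at hzx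
      obtain ⟨_, hx0⟩ := hzx
      exfalso
      rcases hx0 with hx0 | ⟨hx2, hxlt, hxp⟩
      · rcases hz0 with hz0 | ⟨hz2, _⟩
        · exact absurd hx0 (by rw [hz0]; decide)
        · exact absurd hx0 (by rw [hz2]; decide)
      · rcases hz0 with hz0 | ⟨_, hzlt⟩
        · exact absurd hx2 (by rw [hz0]; decide)
        · have hp1 : β ≤ Ordinal.pred (nrm z.1) := le_pred_of_lt' hzlt
          have hp2 : Ordinal.pred (nrm z.1) < lam.ord :=
            lt_of_le_of_lt (Ordinal.pred_le_self _) (nrm_lt hlam z)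
          exact hzns _ hp1 hp2 hxp
    · -- x 0 = 1 : show y ∈ Vnbhd x α directly
      have h2 : x.1 0 ≠ 2 := by rw [h0]; decide
      rw [Vnbhd, if_neg h2, if_pos h0] at hzx ⊢
      obtain ⟨hxr, hxns, _⟩ := hzx
      have hα1 : 1 ≤ α := one_le_of_nrm_le x h2 hα
      refine ⟨fun γ h1γ h2γ => by
        rw [← hzr γ h1γ (lt_of_lt_of_le h2γ hαβ), hxr γ h1γ h2γ], ?_, Or.inl k0⟩
      intro γ hγ hγlt
      by_cases hγβ : β ≤ γ
      · rw [nrm_spec y (le_trans hyβ hγβ)]; decide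
      · have h1γ : 1 ≤ γ := le_trans hα1 hγ
        rw [← hzr γ h1γ (not_le.1 hγβ)]
        exact hxns γ hγ hγlt
    · -- x 0 = 2 : contradiction
      rw [Vnbhd, if_pos h0] at hzx
      exfalso
      have hzx2 : z.1 0 = 2 := by rw [mem_singleton_iff.1 hzx]; exact h0
      rcases hz0 with hz0 | ⟨_, hzlt⟩
      · exact absurd hzx2 (by rw [hz0]; decide)
      · have : nrm z.1 ≤ β := by
          rw [mem_singleton_iff.1 hzx]; exact le_trans hα hαβ
        exact absurd hzlt (not_lt.2 this)
  · -- y 0 = 2 : z = y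
    rw [Vnbhd, if_pos k0] at hzy
    rw [← mem_singleton_iff.1 hzy]
    exact hzx

lemma Vnbhd_closed {lam : Cardinal.{u}} (hlam : ℵ₀ ≤ lam) {x : ↥(Xset lam)}
    {α : Ordinal.{u}} (hα : nrm x.1 ≤ α) (hαl : α < lam.ord) :
    (Vnbhd lam x α)ᶜ ∈ tauSet lam := by
  intro y hy
  exact ⟨max α (nrm y.1), le_max_right _ _, max_lt hαl (nrm_lt hlam y),
    fun z hz => Vnbhd_disj hlam hα hy z hz⟩

/-- The topological space `(X, τ)` is zero-dimensional: it has a base of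
the topology `τ` consisting of clopen sets. -/
theorem zeroDimensional_tau (lam : Cardinal.{u}) (hlam : ℵ₀ ≤ lam) :
    ∃ B : Set (Set ↥(Xset lam)), IsBase (tau lam hlam) B ∧
      ∀ U ∈ B, IsOpen[tau lam hlam] U ∧ IsClosed[tau lam hlam] U := by
  refine ⟨Vfamily lam, ⟨?_, ?_⟩, ?_⟩
  · rintro U ⟨x, α, hα1, hα2, rfl⟩
    exact Vnbhd_open hlam hα1 hα2
  · intro U hU
    refine ⟨{W | W ∈ Vfamily lam ∧ W ⊆ U}, fun W hW => hW.1, ?_⟩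
    apply Subset.antisymm
    · intro x hx
      obtain ⟨α, hα1, hα2, hα3⟩ := hU x hx
      exact ⟨Vnbhd lam x α, ⟨⟨x, α, hα1, hα2, rfl⟩, hα3⟩, mem_Vnbhd_self x hα1⟩
    · rintro x ⟨W, ⟨_, hWU⟩, hxW⟩
      exact hWU hxW
  · rintro U ⟨x, α, hα1, hα2, rfl⟩
    refine ⟨Vnbhd_open hlam hα1 hα2, ?_⟩
    exact @IsClosed.mk _ (tau lam hlam) _ (Vnbhd_closed hlam hα1 hα2)

end LawsonExample
end

section
/- For every cardinal κ < cf(λ), the topological space (X,τ) is a P_κ-space: for every family 𝒰 ⊆ τ with |𝒰| ≤ κ, the intersection ⋂𝒰 belongs to τ. -/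
universe u v

open Ordinal Set Topology Cardinal

namespace LawsonExample

/-- For every cardinal `κ < cf(λ)` the topological space `(X, τ)` is a
`P_κ`-space: the intersection of any family of at most `κ` open sets is open. -/
theorem P_kappa_tau (lam : Cardinal.{u}) (hlam : ℵ₀ ≤ lam) (κ : Cardinal.{u})
    (hκ : κ < (Cardinal.ord lam).cof) :
    ∀ 𝒰 : Set (Set ↥(Xset lam)), (∀ U ∈ 𝒰, IsOpen[tau lam hlam] U) →
      Cardinal.mk ↥𝒰 ≤ Cardinal.lift.{u + 1} κ → IsOpen[tau lam hlam] (⋂₀ 𝒰) := by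
  classical
  intro 𝒰 hop hcard
  show ⋂₀ 𝒰 ∈ tauSet lam
  intro x hx
  choose g hg1 hg2 hg3 using fun U : ↥𝒰 => hop U.1 U.2 x (hx U.1 U.2)
  set S : Set Ordinal.{u} := Set.range g with hS_def
  have hS : ∀ s ∈ S, s < lam.ord := by rintro s ⟨U, rfl⟩; exact hg2 U
  have hsmall : Small.{u} ↥S := by
    have hsub : S ⊆ Set.Iio lam.ord := fun s hs => hS s hs
    have : Small.{u} ↥(Set.Iio lam.ord) := Ordinal.small_Iio lam.ord
    exact small_subset hsub
  let f : Shrink.{u} ↥S → Ordinal.{u} := fun i => ((equivShrink ↥S).symm i).1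
  have hcard' : Cardinal.mk (Shrink.{u} ↥S) < (lam.ord).cof := by
    have h1 : Cardinal.mk ↥S ≤ Cardinal.mk ↥𝒰 := Cardinal.mk_range_le
    have h2 : Cardinal.lift.{u+1} (Cardinal.mk (Shrink.{u} ↥S)) = Cardinal.mk ↥S :=
      Cardinal.lift_mk_shrink'' ↥S
    have h3 : Cardinal.lift.{u+1} (Cardinal.mk (Shrink.{u} ↥S)) <
        Cardinal.lift.{u+1} (lam.ord).cof := by
      rw [h2]
      exact lt_of_le_of_lt (h1.trans hcard) (Cardinal.lift_lt.2 hκ)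
    exact Cardinal.lift_lt.1 h3
  have hβ : iSup f < lam.ord :=
    Ordinal.iSup_lt_ord hcard' fun i => hS _ ((equivShrink ↥S).symm i).2
  refine ⟨max (nrm x.1) (iSup f), le_max_left _ _, max_lt (nrm_lt hlam x) hβ, ?_⟩
  intro y hy U hU
  set U' : ↥𝒰 := ⟨U, hU⟩
  have hgU : g U' ≤ iSup f := by
    have hmem : g U' ∈ S := ⟨U', rfl⟩
    have : g U' = f (equivShrink ↥S ⟨g U', hmem⟩) := by
      simp [f]
    rw [this]
    exact le_ciSup (Ordinal.bddAbove_range f) _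
  exact hg3 U' (Vnbhd_mono x (hg1 U') (hgU.trans (le_max_right _ _)) hy)

end LawsonExample
end

section
/- The partial order ≤_X := {(x,y) ∈ X × X : x·y = x} is not closed in (X,τ) × (X,τ). Specifically, letting 𝟎_β, 𝟏_β ∈ X (for β < λ) be determined by 𝟎_β(β) = 0, 𝟎_β(γ) = 2 for γ ≠ β, and 𝟏_β(β) = 1, 𝟏_β(γ) = 2 for γ ≠ β, the pair (𝟏_0, 𝟎_0) does not belong to ≤_X but belongs to the closure of ≤_X in X × X, since for every ordinal α ∈ [1,λ) and every β ∈ [α,λ) the pair (𝟎_β, 𝟏_β) lies in (V_α(𝟏_0) × V_α(𝟎_0)) ∩ ≤_X. -/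
universe u v

open Ordinal Set Topology Cardinal

namespace LawsonExample

lemma nrm_ite {β : Ordinal.{u}} {c : Fin 3} (hc : c ≠ 2) :
    nrm (fun γ => if γ = β then c else 2) = β + 1 := by
  apply le_antisymm
  · apply csInf_le'
    intro γ hγ
    have hne : γ ≠ β := by
      rintro rfl
      rw [Ordinal.add_one_eq_succ] at hγ
      exact absurd hγ (not_le.2 (Order.lt_succ γ))
    simp [hne]
  · refine le_csInf ⟨β + 1, fun γ hγ => ?_⟩ fun b hb => ?_
    · have hne : γ ≠ β := by
        rintro rfl
        rw [Ordinal.add_one_eq_succ] at hγ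
        exact absurd hγ (not_le.2 (Order.lt_succ γ))
      simp [hne]
    · by_contra h
      push_neg at h
      rw [Ordinal.add_one_eq_succ, Order.lt_succ_iff] at h
      have := hb β h
      simp at this
      exact hc this

lemma nrm_zeroF (β : Ordinal.{u}) : nrm (zeroF β) = β + 1 :=
  nrm_ite (by decide)

lemma nrm_oneF (β : Ordinal.{u}) : nrm (oneF β) = β + 1 :=
  nrm_ite (by decide)

/-- **Claim 10.** The partial order `≤_X = {(x,y) | x·y = x}` is not closed in
`(X,τ) × (X,τ)`.  Specifically, for the elements `𝟎_β, 𝟏_β ∈ X` (`β < λ`) with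
`𝟎_β β = 0`, `𝟏_β β = 1` and value `2` elsewhere, the pair `(𝟏_0, 𝟎_0)` does not belong to
`≤_X` but belongs to the closure of `≤_X` in `X × X`, since for every ordinal `α ∈ [1, λ)` and
every `β ∈ [α, λ)` the pair `(𝟎_β, 𝟏_β)` lies in `(V_α(𝟏_0) × V_α(𝟎_0)) ∩ ≤_X`. -/
theorem partialOrder_not_closed (lam : Cardinal.{u}) (hlam : ℵ₀ ≤ lam)
    (h0 : (0 : Ordinal.{u}) < lam.ord) :
    ¬ @IsClosed (↥(Xset lam) × ↥(Xset lam))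
        (@instTopologicalSpaceProd _ _ (tau lam hlam) (tau lam hlam))
        {p : ↥(Xset lam) × ↥(Xset lam) | pmin lam p.1 p.2 = p.1} ∧
    pmin lam (oneE lam h0) (zeroE lam h0) ≠ oneE lam h0 ∧
    (oneE lam h0, zeroE lam h0) ∈
      @closure (↥(Xset lam) × ↥(Xset lam))
        (@instTopologicalSpaceProd _ _ (tau lam hlam) (tau lam hlam))
        {p : ↥(Xset lam) × ↥(Xset lam) | pmin lam p.1 p.2 = p.1} ∧
    ∀ α : Ordinal.{u}, 1 ≤ α → α < lam.ord → ∀ β : Ordinal.{u}, α ≤ β →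
      ∀ hβ : β < lam.ord,
        zeroE lam hβ ∈ Vnbhd lam (oneE lam h0) α ∧
        oneE lam hβ ∈ Vnbhd lam (zeroE lam h0) α ∧
        pmin lam (zeroE lam hβ) (oneE lam hβ) = zeroE lam hβ := by
  have hnrm1 : nrm (oneE lam h0).1 = 1 := by
    show nrm (oneF 0) = 1
    rw [nrm_oneF, zero_add]
  have hnrm0 : nrm (zeroE lam h0).1 = 1 := by
    show nrm (zeroF 0) = 1
    rw [nrm_zeroF, zero_add]
  have key : ∀ α : Ordinal.{u}, 1 ≤ α → α < lam.ord → ∀ β : Ordinal.{u}, α ≤ β →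
      ∀ hβ : β < lam.ord,
        zeroE lam hβ ∈ Vnbhd lam (oneE lam h0) α ∧
        oneE lam hβ ∈ Vnbhd lam (zeroE lam h0) α ∧
        pmin lam (zeroE lam hβ) (oneE lam hβ) = zeroE lam hβ := by
    intro α h1α hαlt β hαβ hβ
    have hβ0 : β ≠ 0 := by
      rintro rfl
      exact absurd (le_trans h1α hαβ) (by simp)
    have hone0 : (oneE lam h0).1 0 = 1 := by simp [oneE, oneF]
    have hone0' : (oneE lam h0).1 0 ≠ 2 := by rw [hone0]; decide
    have hzero0 : (zeroE lam h0).1 0 = 0 := by simp [zeroE, zeroF]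
    have hzero0' : (zeroE lam h0).1 0 ≠ 2 := by rw [hzero0]; decide
    have hzero0'' : (zeroE lam h0).1 0 ≠ 1 := by rw [hzero0]; decide
    have hrestrict : ∀ (f : Ordinal.{u} → Fin 3) (g : Ordinal.{u} → Fin 3),
        (∀ γ, γ ≠ β → f γ = 2) → (∀ γ, γ ≠ 0 → g γ = 2) →
        ∀ γ, 1 ≤ γ → γ < α → f γ = g γ := by
      intro f g hf hg γ h1γ h2γ
      have hγβ : γ ≠ β := fun e => absurd (e ▸ lt_of_lt_of_le h2γ hαβ) (lt_irrefl _)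
      have hγ0 : γ ≠ 0 := fun e => by
        rw [e] at h1γ; exact absurd h1γ (by simp)
      rw [hf γ hγβ, hg γ hγ0]
    have hzf : ∀ γ, γ ≠ β → zeroF β γ = 2 := fun γ h => by simp [zeroF, h]
    have hof : ∀ γ, γ ≠ β → oneF β γ = 2 := fun γ h => by simp [oneF, h]
    have hzf0 : ∀ γ, γ ≠ (0 : Ordinal.{u}) → zeroF 0 γ = 2 := fun γ h => by simp [zeroF, h]
    have hof0 : ∀ γ, γ ≠ (0 : Ordinal.{u}) → oneF 0 γ = 2 := fun γ h => by simp [oneF, h]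
    have hαβ1 : α < β + 1 := by
      rw [Ordinal.add_one_eq_succ, Order.lt_succ_iff]; exact hαβ
    refine ⟨?_, ?_, ?_⟩
    · rw [Vnbhd, if_neg hone0', if_pos hone0]
      refine ⟨hrestrict (zeroF β) (oneF 0) hzf hof0, ?_, Or.inr ⟨hzf 0 (Ne.symm hβ0), ?_⟩⟩
      · intro γ _ _
        show zeroF β γ ≠ 1
        by_cases h : γ = β <;> simp [zeroF, h]
      · show α < nrm (zeroF β)
        rw [nrm_zeroF]; exact hαβ1
    · rw [Vnbhd, if_neg hzero0', if_neg hzero0'']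
      refine ⟨hrestrict (oneF β) (zeroF 0) hof hzf0, Or.inr ⟨hof 0 (Ne.symm hβ0), ?_, ?_⟩⟩
      · show α < nrm (oneF β)
        rw [nrm_oneF]; exact hαβ1
      · show oneF β (Ordinal.pred (nrm (oneF β))) = 1
        rw [nrm_oneF, Ordinal.add_one_eq_succ, Ordinal.pred_succ]
        simp [oneF]
    · apply Subtype.ext
      funext γ
      show min (zeroF β γ) (oneF β γ) = zeroF β γ
      by_cases h : γ = β <;> simp [zeroF, oneF, h]
  have hne : pmin lam (oneE lam h0) (zeroE lam h0) ≠ oneE lam h0 := by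
    intro h
    have h2 := congrArg (fun z : ↥(Xset lam) => z.1 0) h
    simp only [pmin, oneE, zeroE, oneF, zeroF, if_pos rfl] at h2
    exact absurd h2 (by decide)
  have hcls : (oneE lam h0, zeroE lam h0) ∈
      @closure (↥(Xset lam) × ↥(Xset lam))
        (@instTopologicalSpaceProd _ _ (tau lam hlam) (tau lam hlam))
        {p : ↥(Xset lam) × ↥(Xset lam) | pmin lam p.1 p.2 = p.1} := by
    rw [@mem_closure_iff _ (@instTopologicalSpaceProd _ _ (tau lam hlam) (tau lam hlam)) _ _]
    intro o ho hmem
    obtain ⟨u, v, hu, hv, hau, hbv, huv⟩ :=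
      (@isOpen_prod_iff _ _ (tau lam hlam) (tau lam hlam) o).1 ho _ _ hmem
    obtain ⟨α₁, hα₁n, hα₁lt, hα₁sub⟩ := hu _ hau
    obtain ⟨α₂, hα₂n, hα₂lt, hα₂sub⟩ := hv _ hbv
    set α := max α₁ α₂ with hα_def
    have h1α : 1 ≤ α := le_trans (hnrm1 ▸ hα₁n) (le_max_left _ _)
    have hαlt : α < lam.ord := max_lt hα₁lt hα₂lt
    obtain ⟨m1, m2, m3⟩ := key α h1α hαlt α le_rfl hαlt
    refine ⟨(zeroE lam hαlt, oneE lam hαlt), huv ⟨?_, ?_⟩, m3⟩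
    · exact hα₁sub (Vnbhd_mono _ hα₁n (le_max_left _ _) m1)
    · exact hα₂sub (Vnbhd_mono _ hα₂n (le_max_right _ _) m2)
  refine ⟨fun hc => ?_, hne, hcls, key⟩
  have hsub := @IsClosed.closure_subset _
    (@instTopologicalSpaceProd _ _ (tau lam hlam) (tau lam hlam)) _ hc
  exact hne (hsub hcls)

end LawsonExample
end
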